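/- arXiv:1310.3435 — 2 statements merged into one kernel-verified Lean document; each statement's English description precedes it below -/
import Mathlib

section
/- Let Ω_c, Ω_p ⊆ ℝ² be open sets and let Φ : Ω_c → Ω_p, Φ(ξ,η) = (x(ξ,η), y(ξ,η)), be a bijection such that Φ and its inverse Ψ = (ξ(x,y), η(x,y)) are twice continuously differentiable. If both components of Ψ are harmonic on Ω_p (Δξ = 0 and Δη = 0), then at every point of Ω_c the components of Φ satisfy Winslow's inverse equations: α·x_ξξ − 2β·x_ξη + γ·x_ηη = 0 and α·y_ξξ − 2β·y_ξη + γ·y_ηη = 0, where α = x_η² + y_η², β = x_ξ·x_η + y_ξ·y_η, and γ = x_ξ² + y_ξ². -/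
/-- Partial derivative with respect to the first coordinate. -/
noncomputable def pd1 (f : ℝ × ℝ → ℝ) (p : ℝ × ℝ) : ℝ := fderiv ℝ f p (1, 0)

/-- Partial derivative with respect to the second coordinate. -/
noncomputable def pd2 (f : ℝ × ℝ → ℝ) (p : ℝ × ℝ) : ℝ := fderiv ℝ f p (0, 1)

/-- The Laplacian of a real-valued function on ℝ². -/
noncomputable def lap2 (f : ℝ × ℝ → ℝ) (p : ℝ × ℝ) : ℝ := pd1 (pd1 f) p + pd2 (pd2 f) p

lemma clm_decomp (L : (ℝ × ℝ) →L[ℝ] ℝ) (v : ℝ × ℝ) :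
    L v = v.1 * L (1, 0) + v.2 * L (0, 1) := by
  have : v = v.1 • ((1:ℝ), (0:ℝ)) + v.2 • ((0:ℝ), (1:ℝ)) := by
    simp [Prod.ext_iff]
  rw [this, map_add, map_smul, map_smul]; simp

lemma fderiv_apply_pd (f : ℝ × ℝ → ℝ) (z v : ℝ × ℝ) :
    fderiv ℝ f z v = v.1 * pd1 f z + v.2 * pd2 f z := clm_decomp _ v

lemma pd_fst (g : ℝ × ℝ → ℝ × ℝ) (z v : ℝ × ℝ) (hg : DifferentiableAt ℝ g z) :
    fderiv ℝ (fun w => (g w).1) z v = (fderiv ℝ g z v).1 := by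
  rw [(hg.hasFDerivAt.fst).fderiv]; rfl

lemma pd_snd (g : ℝ × ℝ → ℝ × ℝ) (z v : ℝ × ℝ) (hg : DifferentiableAt ℝ g z) :
    fderiv ℝ (fun w => (g w).2) z v = (fderiv ℝ g z v).2 := by
  rw [(hg.hasFDerivAt.snd).fderiv]; rfl

lemma chain_pd (f : ℝ × ℝ → ℝ) (g : ℝ × ℝ → ℝ × ℝ) (z v : ℝ × ℝ)
    (hf : DifferentiableAt ℝ f (g z)) (hg : DifferentiableAt ℝ g z) :
    fderiv ℝ (fun w => f (g w)) z v
      = (fderiv ℝ g z v).1 * pd1 f (g z) + (fderiv ℝ g z v).2 * pd2 f (g z) := by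
  have h := fderiv_comp z hf hg
  have h2 : fderiv ℝ (fun w => f (g w)) z v = fderiv ℝ f (g z) (fderiv ℝ g z v) := by
    rw [show (fun w => f (g w)) = f ∘ g from rfl, h]; rfl
  rw [h2, fderiv_apply_pd]

lemma pd_contDiffOn (f : ℝ × ℝ → ℝ) (s : Set (ℝ × ℝ)) (hs : IsOpen s)
    (hf : ContDiffOn ℝ 2 f s) (v : ℝ × ℝ) :
    ContDiffOn ℝ 1 (fun z => fderiv ℝ f z v) s := by
  have h1 : ContDiffOn ℝ 1 (fderiv ℝ f) s := hf.fderiv_of_isOpen hs (by norm_num)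
  exact h1.clm_apply contDiffOn_const

lemma pd1_diffAt (f : ℝ × ℝ → ℝ) (s : Set (ℝ × ℝ)) (hs : IsOpen s)
    (hf : ContDiffOn ℝ 2 f s) {z : ℝ × ℝ} (hz : z ∈ s) :
    DifferentiableAt ℝ (pd1 f) z :=
  ((pd_contDiffOn f s hs hf (1,0)).contDiffAt (hs.mem_nhds hz)).differentiableAt (by norm_num)

lemma pd2_diffAt (f : ℝ × ℝ → ℝ) (s : Set (ℝ × ℝ)) (hs : IsOpen s)
    (hf : ContDiffOn ℝ 2 f s) {z : ℝ × ℝ} (hz : z ∈ s) :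
    DifferentiableAt ℝ (pd2 f) z :=
  ((pd_contDiffOn f s hs hf (0,1)).contDiffAt (hs.mem_nhds hz)).differentiableAt (by norm_num)

lemma pd_pd_eq_snd (f : ℝ × ℝ → ℝ) (s : Set (ℝ × ℝ)) (hs : IsOpen s)
    (hf : ContDiffOn ℝ 2 f s) {z : ℝ × ℝ} (hz : z ∈ s) (v w : ℝ × ℝ) :
    fderiv ℝ (fun u => fderiv ℝ f u v) z w = fderiv ℝ (fderiv ℝ f) z w v := by
  have h1 : ContDiffOn ℝ 1 (fderiv ℝ f) s := hf.fderiv_of_isOpen hs (by norm_num)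
  have hd : DifferentiableAt ℝ (fderiv ℝ f) z :=
    ((h1.contDiffAt (hs.mem_nhds hz)).differentiableAt (by norm_num))
  have h2 : HasFDerivAt (fun u => (ContinuousLinearMap.apply ℝ ℝ v) (fderiv ℝ f u))
      ((ContinuousLinearMap.apply ℝ ℝ v).comp (fderiv ℝ (fderiv ℝ f) z)) z :=
    ((ContinuousLinearMap.apply ℝ ℝ v).hasFDerivAt).comp z hd.hasFDerivAt
  have h3 := h2.fderiv
  calc fderiv ℝ (fun u => fderiv ℝ f u v) z w
      = ((ContinuousLinearMap.apply ℝ ℝ v).comp (fderiv ℝ (fderiv ℝ f) z)) w := by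
        rw [← h3]; rfl
    _ = fderiv ℝ (fderiv ℝ f) z w v := rfl

lemma clairaut (f : ℝ × ℝ → ℝ) (s : Set (ℝ × ℝ)) (hs : IsOpen s)
    (hf : ContDiffOn ℝ 2 f s) {z : ℝ × ℝ} (hz : z ∈ s) :
    pd2 (pd1 f) z = pd1 (pd2 f) z := by
  have hca : ContDiffAt ℝ 2 f z := hf.contDiffAt (hs.mem_nhds hz)
  have hsym := hca.isSymmSndFDerivAt (by norm_num)
  have h1 : pd2 (pd1 f) z = fderiv ℝ (fderiv ℝ f) z (0,1) (1,0) :=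
    pd_pd_eq_snd f s hs hf hz (1,0) (0,1)
  have h2 : pd1 (pd2 f) z = fderiv ℝ (fderiv ℝ f) z (1,0) (0,1) :=
    pd_pd_eq_snd f s hs hf hz (0,1) (1,0)
  rw [h1, h2, hsym]

lemma pd_mul (A B : ℝ × ℝ → ℝ) (z v : ℝ × ℝ)
    (hA : DifferentiableAt ℝ A z) (hB : DifferentiableAt ℝ B z) :
    fderiv ℝ (fun w => A w * B w) z v = A z * fderiv ℝ B z v + B z * fderiv ℝ A z v := by
  rw [fderiv_fun_mul hA hB]; simp

/-- Master computation: differentiating the first-order chain-rule identities. -/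
lemma master
    (Ωc Ωp : Set (ℝ × ℝ)) (hΩc : IsOpen Ωc) (hΩp : IsOpen Ωp)
    (Ψ : ℝ × ℝ → ℝ × ℝ) (hmaps : Set.MapsTo Ψ Ωp Ωc)
    (hΨ : ContDiffOn ℝ 2 Ψ Ωp)
    (f : ℝ × ℝ → ℝ) (hf : ContDiffOn ℝ 2 f Ωc)
    (k1 k2 : ℝ) (q : ℝ × ℝ) (hq : q ∈ Ωp)
    (hE1 : ∀ z ∈ Ωp, pd1 (fun w => (Ψ w).1) z * pd1 f (Ψ z)
        + pd1 (fun w => (Ψ w).2) z * pd2 f (Ψ z) = k1)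
    (hE2 : ∀ z ∈ Ωp, pd2 (fun w => (Ψ w).1) z * pd1 f (Ψ z)
        + pd2 (fun w => (Ψ w).2) z * pd2 f (Ψ z) = k2)
    (hlapξ : lap2 (fun w => (Ψ w).1) q = 0) (hlapη : lap2 (fun w => (Ψ w).2) q = 0) :
    (pd1 (fun w => (Ψ w).1) q ^ 2 + pd2 (fun w => (Ψ w).1) q ^ 2) * pd1 (pd1 f) (Ψ q)
    + (pd1 (fun w => (Ψ w).1) q * pd1 (fun w => (Ψ w).2) q
        + pd2 (fun w => (Ψ w).1) q * pd2 (fun w => (Ψ w).2) q)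
        * (pd2 (pd1 f) (Ψ q) + pd1 (pd2 f) (Ψ q))
    + (pd1 (fun w => (Ψ w).2) q ^ 2 + pd2 (fun w => (Ψ w).2) q ^ 2) * pd2 (pd2 f) (Ψ q)
    = 0 := by
  have hpm : Ψ q ∈ Ωc := hmaps hq
  have hΨcd : ∀ z ∈ Ωp, DifferentiableAt ℝ Ψ z := fun z hz =>
    (hΨ.contDiffAt (hΩp.mem_nhds hz)).differentiableAt (by norm_num)
  have hΨdq : DifferentiableAt ℝ Ψ q := hΨcd q hq
  have hξc : ContDiffOn ℝ 2 (fun w => (Ψ w).1) Ωp := contDiff_fst.comp_contDiffOn hΨ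
  have hηc : ContDiffOn ℝ 2 (fun w => (Ψ w).2) Ωp := contDiff_snd.comp_contDiffOn hΨ
  have dξ1 : DifferentiableAt ℝ (pd1 (fun w => (Ψ w).1)) q := pd1_diffAt _ Ωp hΩp hξc hq
  have dξ2 : DifferentiableAt ℝ (pd2 (fun w => (Ψ w).1)) q := pd2_diffAt _ Ωp hΩp hξc hq
  have dη1 : DifferentiableAt ℝ (pd1 (fun w => (Ψ w).2)) q := pd1_diffAt _ Ωp hΩp hηc hq
  have dη2 : DifferentiableAt ℝ (pd2 (fun w => (Ψ w).2)) q := pd2_diffAt _ Ωp hΩp hηc hq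
  have dF1 : DifferentiableAt ℝ (pd1 f) (Ψ q) := pd1_diffAt f Ωc hΩc hf hpm
  have dF2 : DifferentiableAt ℝ (pd2 f) (Ψ q) := pd2_diffAt f Ωc hΩc hf hpm
  have dC1 : DifferentiableAt ℝ (fun z => pd1 f (Ψ z)) q := DifferentiableAt.comp q dF1 hΨdq
  have dC2 : DifferentiableAt ℝ (fun z => pd2 f (Ψ z)) q := DifferentiableAt.comp q dF2 hΨdq
  -- chain rule for pd1 f ∘ Ψ and pd2 f ∘ Ψ
  have hch1 : ∀ v : ℝ × ℝ, fderiv ℝ (fun z => pd1 f (Ψ z)) q v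
      = (fderiv ℝ Ψ q v).1 * pd1 (pd1 f) (Ψ q) + (fderiv ℝ Ψ q v).2 * pd2 (pd1 f) (Ψ q) :=
    fun v => chain_pd (pd1 f) Ψ q v dF1 hΨdq
  have hch2 : ∀ v : ℝ × ℝ, fderiv ℝ (fun z => pd2 f (Ψ z)) q v
      = (fderiv ℝ Ψ q v).1 * pd1 (pd2 f) (Ψ q) + (fderiv ℝ Ψ q v).2 * pd2 (pd2 f) (Ψ q) :=
    fun v => chain_pd (pd2 f) Ψ q v dF2 hΨdq
  -- component identities
  have c1 : (fderiv ℝ Ψ q ((1:ℝ),(0:ℝ))).1 = pd1 (fun w => (Ψ w).1) q :=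
    (pd_fst Ψ q (1,0) hΨdq).symm
  have c2 : (fderiv ℝ Ψ q ((1:ℝ),(0:ℝ))).2 = pd1 (fun w => (Ψ w).2) q :=
    (pd_snd Ψ q (1,0) hΨdq).symm
  have c3 : (fderiv ℝ Ψ q ((0:ℝ),(1:ℝ))).1 = pd2 (fun w => (Ψ w).1) q :=
    (pd_fst Ψ q (0,1) hΨdq).symm
  have c4 : (fderiv ℝ Ψ q ((0:ℝ),(1:ℝ))).2 = pd2 (fun w => (Ψ w).2) q :=
    (pd_snd Ψ q (0,1) hΨdq).symm
  -- derivative of the constant identities is zero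
  have h01 : fderiv ℝ (fun z => pd1 (fun w => (Ψ w).1) z * pd1 f (Ψ z)
      + pd1 (fun w => (Ψ w).2) z * pd2 f (Ψ z)) q = 0 := by
    have hev : (fun z => pd1 (fun w => (Ψ w).1) z * pd1 f (Ψ z)
        + pd1 (fun w => (Ψ w).2) z * pd2 f (Ψ z)) =ᶠ[nhds q] (fun _ => k1) :=
      Filter.eventuallyEq_of_mem (hΩp.mem_nhds hq) hE1
    rw [hev.fderiv_eq]; exact fderiv_const_apply k1
  have h02 : fderiv ℝ (fun z => pd2 (fun w => (Ψ w).1) z * pd1 f (Ψ z)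
      + pd2 (fun w => (Ψ w).2) z * pd2 f (Ψ z)) q = 0 := by
    have hev : (fun z => pd2 (fun w => (Ψ w).1) z * pd1 f (Ψ z)
        + pd2 (fun w => (Ψ w).2) z * pd2 f (Ψ z)) =ᶠ[nhds q] (fun _ => k2) :=
      Filter.eventuallyEq_of_mem (hΩp.mem_nhds hq) hE2
    rw [hev.fderiv_eq]; exact fderiv_const_apply k2
  -- equation (I)
  have hI : (0:ℝ) = pd1 (pd1 (fun w => (Ψ w).1)) q * pd1 f (Ψ q)
      + pd1 (fun w => (Ψ w).1) q *
        (pd1 (fun w => (Ψ w).1) q * pd1 (pd1 f) (Ψ q)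
          + pd1 (fun w => (Ψ w).2) q * pd2 (pd1 f) (Ψ q))
      + (pd1 (pd1 (fun w => (Ψ w).2)) q * pd2 f (Ψ q)
      + pd1 (fun w => (Ψ w).2) q *
        (pd1 (fun w => (Ψ w).1) q * pd1 (pd2 f) (Ψ q)
          + pd1 (fun w => (Ψ w).2) q * pd2 (pd2 f) (Ψ q))) := by
    have e0 : fderiv ℝ (fun z => pd1 (fun w => (Ψ w).1) z * pd1 f (Ψ z)
        + pd1 (fun w => (Ψ w).2) z * pd2 f (Ψ z)) q ((1:ℝ),(0:ℝ)) = 0 := by rw [h01]; rfl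
    rw [fderiv_fun_add (dξ1.fun_mul dC1) (dη1.fun_mul dC2)] at e0
    rw [ContinuousLinearMap.add_apply] at e0
    rw [pd_mul _ _ q _ dξ1 dC1, pd_mul _ _ q _ dη1 dC2] at e0
    rw [hch1, hch2, c1, c2] at e0
    rw [← e0]
    ring_nf
    rfl
  -- equation (II)
  have hII : (0:ℝ) = pd2 (pd2 (fun w => (Ψ w).1)) q * pd1 f (Ψ q)
      + pd2 (fun w => (Ψ w).1) q *
        (pd2 (fun w => (Ψ w).1) q * pd1 (pd1 f) (Ψ q)
          + pd2 (fun w => (Ψ w).2) q * pd2 (pd1 f) (Ψ q))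
      + (pd2 (pd2 (fun w => (Ψ w).2)) q * pd2 f (Ψ q)
      + pd2 (fun w => (Ψ w).2) q *
        (pd2 (fun w => (Ψ w).1) q * pd1 (pd2 f) (Ψ q)
          + pd2 (fun w => (Ψ w).2) q * pd2 (pd2 f) (Ψ q))) := by
    have e0 : fderiv ℝ (fun z => pd2 (fun w => (Ψ w).1) z * pd1 f (Ψ z)
        + pd2 (fun w => (Ψ w).2) z * pd2 f (Ψ z)) q ((0:ℝ),(1:ℝ)) = 0 := by rw [h02]; rfl
    rw [fderiv_fun_add (dξ2.fun_mul dC1) (dη2.fun_mul dC2)] at e0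
    rw [ContinuousLinearMap.add_apply] at e0
    rw [pd_mul _ _ q _ dξ2 dC1, pd_mul _ _ q _ dη2 dC2] at e0
    rw [hch1, hch2, c3, c4] at e0
    rw [← e0]
    ring_nf
    rfl
  have hl1 : pd1 (pd1 (fun w => (Ψ w).1)) q + pd2 (pd2 (fun w => (Ψ w).1)) q = 0 := hlapξ
  have hl2 : pd1 (pd1 (fun w => (Ψ w).2)) q + pd2 (pd2 (fun w => (Ψ w).2)) q = 0 := hlapη
  linear_combination (-1 : ℝ) * hI - hII - pd1 f (Ψ q) * hl1 - pd2 f (Ψ q) * hl2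

lemma first_order (s : Set (ℝ × ℝ)) (hs : IsOpen s) (g : ℝ × ℝ → ℝ × ℝ)
    (F proj : ℝ × ℝ → ℝ) (z v : ℝ × ℝ) (hz : z ∈ s)
    (hFd : DifferentiableAt ℝ F (g z)) (hgd : DifferentiableAt ℝ g z)
    (heq : ∀ w ∈ s, F (g w) = proj w) (k : ℝ) (hk : fderiv ℝ proj z v = k) :
    (fderiv ℝ g z v).1 * pd1 F (g z) + (fderiv ℝ g z v).2 * pd2 F (g z) = k := by
  rw [← chain_pd F g z v hFd hgd,
    (Filter.eventuallyEq_of_mem (hs.mem_nhds hz) heq).fderiv_eq, hk]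

lemma fderiv_fst_apply (z : ℝ × ℝ) (v : ℝ × ℝ) :
    fderiv ℝ (fun w : ℝ × ℝ => w.1) z v = v.1 := by
  rw [show (fun w : ℝ × ℝ => w.1) = Prod.fst from rfl, fderiv_fst]; rfl

lemma fderiv_snd_apply (z : ℝ × ℝ) (v : ℝ × ℝ) :
    fderiv ℝ (fun w : ℝ × ℝ => w.2) z v = v.2 := by
  rw [show (fun w : ℝ × ℝ => w.2) = Prod.snd from rfl, fderiv_snd]; rfl

/-- If `Φ = (x, y) : Ω_c → Ω_p` is a bijection between open sets with twice continuously
differentiable inverse `Ψ = (ξ, η)`, and both components of `Ψ` are harmonic on `Ω_p`, then the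
components of `Φ` satisfy Winslow's inverse equations
`α x_ξξ − 2β x_ξη + γ x_ηη = 0` and `α y_ξξ − 2β y_ξη + γ y_ηη = 0` on `Ω_c`, where
`α = x_η² + y_η²`, `β = x_ξ x_η + y_ξ y_η`, `γ = x_ξ² + y_ξ²`. -/
theorem winslow_inverse_equations
    (Ωc Ωp : Set (ℝ × ℝ)) (hΩc : IsOpen Ωc) (hΩp : IsOpen Ωp)
    (Φ Ψ : ℝ × ℝ → ℝ × ℝ)
    (hbij : Set.BijOn Φ Ωc Ωp)
    (hinv : Set.InvOn Ψ Φ Ωc Ωp)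
    (hΦ : ContDiffOn ℝ 2 Φ Ωc)
    (hΨ : ContDiffOn ℝ 2 Ψ Ωp)
    (hharm : ∀ q ∈ Ωp, lap2 (fun z => (Ψ z).1) q = 0 ∧ lap2 (fun z => (Ψ z).2) q = 0) :
    ∀ p ∈ Ωc,
      let x : ℝ × ℝ → ℝ := fun z => (Φ z).1
      let y : ℝ × ℝ → ℝ := fun z => (Φ z).2
      let α : ℝ := (pd2 x p) ^ 2 + (pd2 y p) ^ 2
      let β : ℝ := pd1 x p * pd2 x p + pd1 y p * pd2 y p
      let γ : ℝ := (pd1 x p) ^ 2 + (pd1 y p) ^ 2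
      α * pd1 (pd1 x) p - 2 * β * pd2 (pd1 x) p + γ * pd2 (pd2 x) p = 0 ∧
      α * pd1 (pd1 y) p - 2 * β * pd2 (pd1 y) p + γ * pd2 (pd2 y) p = 0 := by
  intro p hp
  intro x y α β γ
  set q : ℝ × ℝ := Φ p with hqdef
  have hq : q ∈ Ωp := hbij.mapsTo hp
  have hΨp : Ψ q = p := hinv.1 hp
  have hmaps : Set.MapsTo Ψ Ωp Ωc := by
    intro z hz
    obtain ⟨w, hw, rfl⟩ := hbij.surjOn hz
    rw [hinv.1 hw]; exact hw
  have hΦcd : ∀ w ∈ Ωc, DifferentiableAt ℝ Φ w := fun w hw =>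
    (hΦ.contDiffAt (hΩc.mem_nhds hw)).differentiableAt (by norm_num)
  have hΨcd : ∀ z ∈ Ωp, DifferentiableAt ℝ Ψ z := fun z hz =>
    (hΨ.contDiffAt (hΩp.mem_nhds hz)).differentiableAt (by norm_num)
  have hxc : ContDiffOn ℝ 2 x Ωc := contDiff_fst.comp_contDiffOn hΦ
  have hyc : ContDiffOn ℝ 2 y Ωc := contDiff_snd.comp_contDiffOn hΦ
  have hξc : ContDiffOn ℝ 2 (fun w => (Ψ w).1) Ωp := contDiff_fst.comp_contDiffOn hΨ
  have hηc : ContDiffOn ℝ 2 (fun w => (Ψ w).2) Ωp := contDiff_snd.comp_contDiffOn hΨ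
  have hxd : ∀ w ∈ Ωc, DifferentiableAt ℝ x w := fun w hw =>
    (hxc.contDiffAt (hΩc.mem_nhds hw)).differentiableAt (by norm_num)
  have hyd : ∀ w ∈ Ωc, DifferentiableAt ℝ y w := fun w hw =>
    (hyc.contDiffAt (hΩc.mem_nhds hw)).differentiableAt (by norm_num)
  have hξd : ∀ z ∈ Ωp, DifferentiableAt ℝ (fun w => (Ψ w).1) z := fun z hz =>
    (hξc.contDiffAt (hΩp.mem_nhds hz)).differentiableAt (by norm_num)
  have hηd : ∀ z ∈ Ωp, DifferentiableAt ℝ (fun w => (Ψ w).2) z := fun z hz =>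
    (hηc.contDiffAt (hΩp.mem_nhds hz)).differentiableAt (by norm_num)
  -- first-order identities on the Ψ side (JK = I relations), valid on all of Ωp
  have hE1x : ∀ z ∈ Ωp, pd1 (fun w => (Ψ w).1) z * pd1 x (Ψ z)
      + pd1 (fun w => (Ψ w).2) z * pd2 x (Ψ z) = 1 := by
    intro z hz
    have h := first_order Ωp hΩp Ψ x (fun w => w.1) z (1,0) hz
      (hxd _ (hmaps hz)) (hΨcd z hz)
      (fun w hw => congrArg Prod.fst (hinv.2 hw)) 1 (fderiv_fst_apply z (1,0))
    rw [← pd_fst Ψ z (1,0) (hΨcd z hz), ← pd_snd Ψ z (1,0) (hΨcd z hz)] at h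
    exact h
  have hE2x : ∀ z ∈ Ωp, pd2 (fun w => (Ψ w).1) z * pd1 x (Ψ z)
      + pd2 (fun w => (Ψ w).2) z * pd2 x (Ψ z) = 0 := by
    intro z hz
    have h := first_order Ωp hΩp Ψ x (fun w => w.1) z (0,1) hz
      (hxd _ (hmaps hz)) (hΨcd z hz)
      (fun w hw => congrArg Prod.fst (hinv.2 hw)) 0 (fderiv_fst_apply z (0,1))
    rw [← pd_fst Ψ z (0,1) (hΨcd z hz), ← pd_snd Ψ z (0,1) (hΨcd z hz)] at h
    exact h
  have hE1y : ∀ z ∈ Ωp, pd1 (fun w => (Ψ w).1) z * pd1 y (Ψ z)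
      + pd1 (fun w => (Ψ w).2) z * pd2 y (Ψ z) = 0 := by
    intro z hz
    have h := first_order Ωp hΩp Ψ y (fun w => w.2) z (1,0) hz
      (hyd _ (hmaps hz)) (hΨcd z hz)
      (fun w hw => congrArg Prod.snd (hinv.2 hw)) 0 (fderiv_snd_apply z (1,0))
    rw [← pd_fst Ψ z (1,0) (hΨcd z hz), ← pd_snd Ψ z (1,0) (hΨcd z hz)] at h
    exact h
  have hE2y : ∀ z ∈ Ωp, pd2 (fun w => (Ψ w).1) z * pd1 y (Ψ z)
      + pd2 (fun w => (Ψ w).2) z * pd2 y (Ψ z) = 1 := by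
    intro z hz
    have h := first_order Ωp hΩp Ψ y (fun w => w.2) z (0,1) hz
      (hyd _ (hmaps hz)) (hΨcd z hz)
      (fun w hw => congrArg Prod.snd (hinv.2 hw)) 1 (fderiv_snd_apply z (0,1))
    rw [← pd_fst Ψ z (0,1) (hΨcd z hz), ← pd_snd Ψ z (0,1) (hΨcd z hz)] at h
    exact h
  -- first-order identities on the Φ side (KJ = I relations), at p
  have hR1 : pd1 x p * pd1 (fun w => (Ψ w).1) q + pd1 y p * pd2 (fun w => (Ψ w).1) q = 1 := by
    have h := first_order Ωc hΩc Φ (fun w => (Ψ w).1) (fun w => w.1) p (1,0) hp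
      (hξd _ (hbij.mapsTo hp)) (hΦcd p hp)
      (fun w hw => congrArg Prod.fst (hinv.1 hw)) 1 (fderiv_fst_apply p (1,0))
    rw [← pd_fst Φ p (1,0) (hΦcd p hp), ← pd_snd Φ p (1,0) (hΦcd p hp)] at h
    exact h
  have hR2 : pd2 x p * pd1 (fun w => (Ψ w).1) q + pd2 y p * pd2 (fun w => (Ψ w).1) q = 0 := by
    have h := first_order Ωc hΩc Φ (fun w => (Ψ w).1) (fun w => w.1) p (0,1) hp
      (hξd _ (hbij.mapsTo hp)) (hΦcd p hp)
      (fun w hw => congrArg Prod.fst (hinv.1 hw)) 0 (fderiv_fst_apply p (0,1))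
    rw [← pd_fst Φ p (0,1) (hΦcd p hp), ← pd_snd Φ p (0,1) (hΦcd p hp)] at h
    exact h
  have hR3 : pd1 x p * pd1 (fun w => (Ψ w).2) q + pd1 y p * pd2 (fun w => (Ψ w).2) q = 0 := by
    have h := first_order Ωc hΩc Φ (fun w => (Ψ w).2) (fun w => w.2) p (1,0) hp
      (hηd _ (hbij.mapsTo hp)) (hΦcd p hp)
      (fun w hw => congrArg Prod.snd (hinv.1 hw)) 0 (fderiv_snd_apply p (1,0))
    rw [← pd_fst Φ p (1,0) (hΦcd p hp), ← pd_snd Φ p (1,0) (hΦcd p hp)] at h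
    exact h
  have hR4 : pd2 x p * pd1 (fun w => (Ψ w).2) q + pd2 y p * pd2 (fun w => (Ψ w).2) q = 1 := by
    have h := first_order Ωc hΩc Φ (fun w => (Ψ w).2) (fun w => w.2) p (0,1) hp
      (hηd _ (hbij.mapsTo hp)) (hΦcd p hp)
      (fun w hw => congrArg Prod.snd (hinv.1 hw)) 1 (fderiv_snd_apply p (0,1))
    rw [← pd_fst Φ p (0,1) (hΦcd p hp), ← pd_snd Φ p (0,1) (hΦcd p hp)] at h
    exact h
  -- master equations
  have hMx := master Ωc Ωp hΩc hΩp Ψ hmaps hΨ x hxc 1 0 q hq hE1x hE2x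
    (hharm q hq).1 (hharm q hq).2
  have hMy := master Ωc Ωp hΩc hΩp Ψ hmaps hΨ y hyc 0 1 q hq hE1y hE2y
    (hharm q hq).1 (hharm q hq).2
  rw [hΨp] at hMx hMy
  -- Clairaut
  have hCx : pd2 (pd1 x) p = pd1 (pd2 x) p := clairaut x Ωc hΩc hxc hp
  have hCy : pd2 (pd1 y) p = pd1 (pd2 y) p := clairaut y Ωc hΩc hyc hp
  -- abbreviations
  set a := pd1 (fun w => (Ψ w).1) q with hadef
  set b := pd1 (fun w => (Ψ w).2) q with hbdef
  set c := pd2 (fun w => (Ψ w).1) q with hcdef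
  set d := pd2 (fun w => (Ψ w).2) q with hddef
  set x1 := pd1 x p; set x2 := pd2 x p; set y1 := pd1 y p; set y2 := pd2 y p
  have hj1 := hE1x q hq; have hj2 := hE2x q hq
  have hj3 := hE1y q hq; have hj4 := hE2y q hq
  rw [hΨp] at hj1 hj2 hj3 hj4
  set D : ℝ := x1 * y2 - x2 * y1 with hDdef
  have hda : D * a = y2 := by linear_combination y2 * hR1 - y1 * hR2
  have hdc : D * c = -x2 := by linear_combination x1 * hR2 - x2 * hR1
  have hdb : D * b = -y1 := by linear_combination y2 * hR3 - y1 * hR4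
  have hdd : D * d = x1 := by linear_combination x1 * hR4 - x2 * hR3
  constructor
  · -- x equation
    have hSx : (a^2 + c^2) * pd1 (pd1 x) p + 2*(a*b + c*d) * pd2 (pd1 x) p
        + (b^2 + d^2) * pd2 (pd2 x) p = 0 := by
      linear_combination hMx + (a*b + c*d) * hCx
    show α * pd1 (pd1 x) p - 2 * β * pd2 (pd1 x) p + γ * pd2 (pd2 x) p = 0
    have e1 : D^2 * (a^2 + c^2) = α := by
      show D^2 * (a^2 + c^2) = x2^2 + y2^2
      linear_combination (D*a + y2) * hda + (D*c - x2) * hdc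
    have e2 : D^2 * (a*b + c*d) = -β := by
      show D^2 * (a*b + c*d) = -(x1 * x2 + y1 * y2)
      linear_combination (D*b) * hda + y2 * hdb + (D*d) * hdc - x2 * hdd
    have e3 : D^2 * (b^2 + d^2) = γ := by
      show D^2 * (b^2 + d^2) = x1^2 + y1^2
      linear_combination (D*b - y1) * hdb + (D*d + x1) * hdd
    linear_combination D^2 * hSx - pd1 (pd1 x) p * e1 - 2 * pd2 (pd1 x) p * e2
      - pd2 (pd2 x) p * e3
  · have hSy : (a^2 + c^2) * pd1 (pd1 y) p + 2*(a*b + c*d) * pd2 (pd1 y) p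
        + (b^2 + d^2) * pd2 (pd2 y) p = 0 := by
      linear_combination hMy + (a*b + c*d) * hCy
    show α * pd1 (pd1 y) p - 2 * β * pd2 (pd1 y) p + γ * pd2 (pd2 y) p = 0
    have e1 : D^2 * (a^2 + c^2) = α := by
      show D^2 * (a^2 + c^2) = x2^2 + y2^2
      linear_combination (D*a + y2) * hda + (D*c - x2) * hdc
    have e2 : D^2 * (a*b + c*d) = -β := by
      show D^2 * (a*b + c*d) = -(x1 * x2 + y1 * y2)
      linear_combination (D*b) * hda + y2 * hdb + (D*d) * hdc - x2 * hdd
    have e3 : D^2 * (b^2 + d^2) = γ := by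
      show D^2 * (b^2 + d^2) = x1^2 + y1^2
      linear_combination (D*b - y1) * hdb + (D*d + x1) * hdd
    linear_combination D^2 * hSy - pd1 (pd1 y) p * e1 - 2 * pd2 (pd1 y) p * e2
      - pd2 (pd2 y) p * e3
end

section
/- Fix real constants T_1 > 0, T_MC > 0, T_com > 0 and k > 0. For n ∈ ℕ let p_n = (n+1)², let S^SDD(n) = p_n·T_1/(2·k·n·T_MC + T_1) be the stochastic domain decomposition speedup, and let S^PFD(n) = p_n/(1 + (T_com/T_1)·p_n) be the parallel finite difference speedup on the same number p_n of processors. Then S^SDD(n) → ∞ as n → ∞, and there exists N ∈ ℕ such that S^SDD(n) > S^PFD(n) for all n ≥ N; i.e., the speedup of the stochastic algorithm exceeds that of the parallel finite difference method whenever the number of processors is large enough. -/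
open Filter

/-- With `p_n = (n+1)²` processors, the stochastic domain decomposition speedup
`S^SDD(n) = p_n·T₁/(2·k·n·T_MC + T₁)` tends to infinity, and eventually exceeds the parallel
finite difference speedup `S^PFD(n) = p_n/(1 + (T_com/T₁)·p_n)` on the same number of
processors. -/
theorem sdd_speedup_eventually_beats_pfd
    (T1 TMC Tcom k : ℝ) (hT1 : 0 < T1) (hTMC : 0 < TMC) (hTcom : 0 < Tcom) (hk : 0 < k)
    (p SSDD SPFD : ℕ → ℝ)
    (hp : ∀ n : ℕ, p n = ((n : ℝ) + 1) ^ 2)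
    (hSSDD : ∀ n : ℕ, SSDD n = p n * T1 / (2 * k * (n : ℝ) * TMC + T1))
    (hSPFD : ∀ n : ℕ, SPFD n = p n / (1 + (Tcom / T1) * p n)) :
    Tendsto SSDD atTop atTop ∧ ∃ N : ℕ, ∀ n ≥ N, SPFD n < SSDD n := by
  have hc : 0 < T1 / (2 * k * TMC + T1) := by positivity
  have hlow : ∀ n : ℕ, ((n : ℝ) + 1) * (T1 / (2 * k * TMC + T1)) ≤ SSDD n := by
    intro n
    have hn : (0:ℝ) ≤ (n : ℝ) := Nat.cast_nonneg n
    rw [hSSDD n, hp n, ← mul_div_assoc, div_le_div_iff₀ (by positivity) (by positivity)]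
    have key : 0 ≤ ((n:ℝ)+1) * T1 * (2*k*TMC + (n:ℝ)*T1) := by positivity
    nlinarith [key]
  have haux : Tendsto (fun n : ℕ => ((n : ℝ) + 1) * (T1 / (2 * k * TMC + T1))) atTop atTop := by
    have h1 : Tendsto (fun n : ℕ => (n : ℝ) + 1) atTop atTop :=
      tendsto_atTop_add_const_right atTop 1 tendsto_natCast_atTop_atTop
    exact h1.atTop_mul_const hc
  have htendsto : Tendsto SSDD atTop atTop := tendsto_atTop_mono hlow haux
  refine ⟨htendsto, ?_⟩
  have hbound : ∀ n : ℕ, SPFD n < T1 / Tcom := by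
    intro n
    have hpn : 0 < p n := by rw [hp n]; positivity
    rw [hSPFD n, div_lt_div_iff₀ (by positivity) hTcom]
    have h1 : 0 < Tcom / T1 := by positivity
    have : Tcom / T1 * T1 = Tcom := div_mul_cancel₀ _ hT1.ne'
    nlinarith [mul_pos h1 hpn, mul_pos hpn hTcom]
  have hev : ∀ᶠ n in atTop, T1 / Tcom ≤ SSDD n := htendsto.eventually_ge_atTop _
  obtain ⟨N, hN⟩ := hev.exists_forall_of_atTop
  exact ⟨N, fun n hn => lt_of_lt_of_le (hbound n) (hN n hn)⟩
end
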